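/- Let β>0, t>0, r>0, ρ>0 and θ,ψ∈ℝ. Then the Carslaw heat kernel is symmetric under interchange of its two arguments on the cone: H_β(r,θ,ρ,ψ;t) = H_β(ρ,ψ,r,θ;t). -/
import Mathlib


open MeasureTheory

/-- The integrand of the Carslaw heat kernel on the cone of angle `β`:
`α ↦ e^{rρ cos(α−θ)/(2t)} · cot(π(α−ψ)/β)`. -/
noncomputable def carslawF (β t r ρ θ ψ : ℝ) (α : ℂ) : ℂ :=
  Complex.exp ((r : ℂ) * (ρ : ℂ) * Complex.cos (α - (θ : ℂ)) / (2 * (t : ℂ))) *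
    Complex.cot ((Real.pi : ℂ) * (α - (ψ : ℂ)) / (β : ℂ))

/-- The integral of `f : ℂ → ℂ` over the Carslaw contour `A_θ(c)`.  The upper piece runs
from `θ+π+i∞` down to `θ+π+ic`, horizontally to `θ−π+ic`, then up to `θ−π+i∞`; the lower
piece runs from `θ−π−i∞` up to `θ−π−ic`, horizontally to `θ+π−ic`, then down to
`θ+π−i∞`. -/
noncomputable def AInt (f : ℂ → ℂ) (θ c : ℝ) : ℂ :=
  (-Complex.I) * (∫ s in Set.Ioi c, f (((θ + Real.pi : ℝ) : ℂ) + (s : ℂ) * Complex.I))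
    - (∫ x in (θ - Real.pi)..(θ + Real.pi), f ((x : ℂ) + (c : ℂ) * Complex.I))
    + Complex.I * (∫ s in Set.Ioi c, f (((θ - Real.pi : ℝ) : ℂ) + (s : ℂ) * Complex.I))
    + Complex.I * (∫ s in Set.Iio (-c), f (((θ - Real.pi : ℝ) : ℂ) + (s : ℂ) * Complex.I))
    + (∫ x in (θ - Real.pi)..(θ + Real.pi), f ((x : ℂ) - (c : ℂ) * Complex.I))
    - Complex.I * (∫ s in Set.Iio (-c), f (((θ + Real.pi : ℝ) : ℂ) + (s : ℂ) * Complex.I))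

/-- The Carslaw heat kernel `H_β(r,θ,ρ,ψ;t)` on the cone of angle `β`:
`H_β = (8πβit)⁻¹ e^{−(r²+ρ²)/(4t)} ∫_{A_θ(c)} e^{rρcos(α−θ)/(2t)} cot(π(α−ψ)/β) dα`
(the value of the contour integral is independent of the height `c > 0`; we take `c = 1`). -/
noncomputable def carslawH (β t r θ ρ ψ : ℝ) : ℂ :=
  (1 / (8 * (Real.pi : ℂ) * (β : ℂ) * Complex.I * (t : ℂ))) *
    Complex.exp (-((r : ℂ) ^ 2 + (ρ : ℂ) ^ 2) / (4 * (t : ℂ))) *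
    AInt (carslawF β t r ρ θ ψ) θ 1

lemma complex_cot_neg (z : ℂ) : Complex.cot (-z) = -Complex.cot z := by
  simp [Complex.cot_eq_cos_div_sin, div_neg, neg_div]

lemma carslawF_reflect (β t r ρ θ ψ : ℝ) (α : ℂ) :
    carslawF β t r ρ θ ψ α = - carslawF β t ρ r ψ θ ((θ : ℂ) + (ψ : ℂ) - α) := by
  unfold carslawF
  have h1 : (θ : ℂ) + (ψ : ℂ) - α - (ψ : ℂ) = -(α - (θ : ℂ)) := by ring
  have h2 : (Real.pi : ℂ) * ((θ : ℂ) + (ψ : ℂ) - α - (θ : ℂ)) / (β : ℂ)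
      = -((Real.pi : ℂ) * (α - (ψ : ℂ)) / (β : ℂ)) := by ring
  rw [h1, h2, Complex.cos_neg, complex_cot_neg]
  ring_nf

section aux
variable {f g : ℂ → ℂ} {θ ψ : ℝ}

lemma aux_vert (hpt : ∀ α : ℂ, f α = -g ((θ : ℂ) + (ψ : ℂ) - α)) (a c : ℝ) :
    (∫ s in Set.Ioi c, f ((a : ℂ) + (s : ℂ) * Complex.I))
      = - ∫ s in Set.Iio (-c), g ((((θ + ψ - a : ℝ)) : ℂ) + (s : ℂ) * Complex.I) := by
  have h1 : ∀ s : ℝ, f ((a : ℂ) + (s : ℂ) * Complex.I)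
      = -g ((((θ + ψ - a : ℝ)) : ℂ) + ((-s : ℝ) : ℂ) * Complex.I) := by
    intro s
    rw [hpt]
    congr 1
    push_cast
    ring
  simp_rw [h1, integral_neg]
  congr 1
  have h2 := integral_comp_neg_Ioi c
    (fun u : ℝ => g ((((θ + ψ - a : ℝ)) : ℂ) + (u : ℂ) * Complex.I))
  rw [integral_Iic_eq_integral_Iio] at h2
  exact h2

lemma aux_hpt_symm (hpt : ∀ α : ℂ, f α = -g ((θ : ℂ) + (ψ : ℂ) - α)) :
    ∀ α : ℂ, g α = -f ((ψ : ℂ) + (θ : ℂ) - α) := by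
  intro α
  rw [hpt ((ψ : ℂ) + (θ : ℂ) - α),
    show (θ : ℂ) + (ψ : ℂ) - ((ψ : ℂ) + (θ : ℂ) - α) = α by ring, neg_neg]

lemma aux_vert' (hpt : ∀ α : ℂ, f α = -g ((θ : ℂ) + (ψ : ℂ) - α)) (a c : ℝ) :
    (∫ s in Set.Iio (-c), f ((a : ℂ) + (s : ℂ) * Complex.I))
      = - ∫ s in Set.Ioi c, g ((((θ + ψ - a : ℝ)) : ℂ) + (s : ℂ) * Complex.I) := by
  have := aux_vert (aux_hpt_symm hpt) (θ + ψ - a) c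
  rw [show ψ + θ - (θ + ψ - a) = a by ring] at this
  rw [this, neg_neg]

lemma aux_horiz (hpt : ∀ α : ℂ, f α = -g ((θ : ℂ) + (ψ : ℂ) - α)) (w : ℂ) :
    (∫ x in (θ - Real.pi)..(θ + Real.pi), f ((x : ℂ) + w))
      = - ∫ x in (ψ - Real.pi)..(ψ + Real.pi), g ((x : ℂ) + (-w)) := by
  have h1 : ∀ x : ℝ, f ((x : ℂ) + w)
      = -(fun u : ℝ => g ((u : ℂ) + (-w))) (θ + ψ - x) := by
    intro x
    rw [hpt]
    simp only
    congr 1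
    push_cast
    ring
  simp_rw [h1, intervalIntegral.integral_neg]
  congr 1
  rw [intervalIntegral.integral_comp_sub_left
    (fun u : ℝ => g ((u : ℂ) + (-w))) (θ + ψ)]
  congr 1 <;> ring

end aux

/-- the Carslaw heat kernel is symmetric under interchange of the two points
`(r,θ)` and `(ρ,ψ)` of the cone: `H_β(r,θ,ρ,ψ;t) = H_β(ρ,ψ,r,θ;t)`. -/
theorem stmt_4 (β t r ρ θ ψ : ℝ) (hβ : 0 < β) (ht : 0 < t) (hr : 0 < r) (hρ : 0 < ρ) :
    carslawH β t r θ ρ ψ = carslawH β t ρ ψ r θ := by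
  have hpt : ∀ α : ℂ, carslawF β t r ρ θ ψ α
      = -carslawF β t ρ r ψ θ ((θ : ℂ) + (ψ : ℂ) - α) := fun α =>
    carslawF_reflect β t r ρ θ ψ α
  have key : AInt (carslawF β t r ρ θ ψ) θ 1 = AInt (carslawF β t ρ r ψ θ) ψ 1 := by
    unfold AInt
    have e1 : θ + ψ - (θ + Real.pi) = ψ - Real.pi := by ring
    have e2 : θ + ψ - (θ - Real.pi) = ψ + Real.pi := by ring
    have hu := aux_horiz hpt (((1:ℝ):ℂ) * Complex.I)
    have hl := aux_horiz hpt (-(((1:ℝ):ℂ) * Complex.I))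
    simp only [neg_neg] at hl
    rw [aux_vert hpt (θ + Real.pi) 1, aux_vert hpt (θ - Real.pi) 1,
      aux_vert' hpt (θ + Real.pi) 1, aux_vert' hpt (θ - Real.pi) 1, e1, e2]
    simp only [sub_eq_add_neg] at hu hl ⊢
    rw [hu, hl]
    ring
  unfold carslawH
  rw [key, show -((r:ℂ)^2+(ρ:ℂ)^2) / (4*(t:ℂ)) = -((ρ:ℂ)^2+(r:ℂ)^2) / (4*(t:ℂ)) by ring]
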